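/- Let n ≥ 1 and let M be a symmetric real n×n matrix such that: (i) M i j ≥ 0 for all i ≠ j; (ii) there exists a vector a with a i > 0 for all i, (M·a) i ≤ 0 for all i, and (M·a) i₀ < 0 for some index i₀; (iii) the simple graph on the index set in which i and j are adjacent iff i ≠ j and M i j > 0 is connected. Then M is negative definite: for every vector y ≠ 0, yᵀ M y < 0. -/
import Mathlib

open Matrix

private lemma walk_edge_ne {V : Type*} {G : SimpleGraph V} {x : V → ℝ} :
    ∀ {u v : V}, G.Walk u v → x u ≠ x v → ∃ i j, G.Adj i j ∧ x i ≠ x j := by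
  intro u v w
  induction w with
  | nil => intro h; exact absurd rfl h
  | @cons u m v h w ih =>
    intro hne
    by_cases hx : x u = x m
    · exact ih (fun he => hne (hx.trans he))
    · exact ⟨u, m, h, hx⟩

private lemma sum_sq_identity {n : ℕ} (b : Fin n → Fin n → ℝ)
    (hb : ∀ i j, b i j = b j i) (x : Fin n → ℝ) :
    ∑ i, ∑ j, b i j * x i * x j
      = ∑ i, (∑ j, b i j) * x i ^ 2
        - (1/2) * ∑ i, ∑ j, b i j * (x i - x j) ^ 2 := by
  have hswap : ∑ i, ∑ j, b i j * x j ^ 2 = ∑ i, ∑ j, b i j * x i ^ 2 := by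
    rw [Finset.sum_comm]
    exact Finset.sum_congr rfl fun i _ => Finset.sum_congr rfl fun j _ => by rw [hb]
  have hexp : ∑ i, ∑ j, b i j * (x i - x j) ^ 2
      = ∑ i, ∑ j, (b i j * x i ^ 2 + b i j * x j ^ 2 - 2 * (b i j * x i * x j)) := by
    refine Finset.sum_congr rfl fun i _ => Finset.sum_congr rfl fun j _ => by ring
  simp only [hexp, Finset.sum_sub_distrib, Finset.sum_add_distrib, hswap,
    ← Finset.mul_sum, ← Finset.sum_mul]
  have : ∑ i, (∑ j, b i j) * x i ^ 2 = ∑ i, ∑ j, b i j * x i ^ 2 := by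
    refine Finset.sum_congr rfl fun i _ => by rw [Finset.sum_mul]
  rw [this]; ring

theorem stmt14 (n : ℕ) (hn : 1 ≤ n) (M : Matrix (Fin n) (Fin n) ℝ)
    (hsymm : M.IsSymm)
    (hoff : ∀ i j : Fin n, i ≠ j → 0 ≤ M i j)
    (a : Fin n → ℝ) (ha : ∀ i, 0 < a i)
    (hMa : ∀ i, M.mulVec a i ≤ 0)
    (i₀ : Fin n) (hMa0 : M.mulVec a i₀ < 0)
    (hconn : (SimpleGraph.fromRel (fun i j : Fin n => 0 < M i j)).Connected) :
    ∀ y : Fin n → ℝ, y ≠ 0 → y ⬝ᵥ M.mulVec y < 0 := by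
  intro y hy0
  have hMsym : ∀ i j, M j i = M i j := fun i j => hsymm.apply i j
  set x : Fin n → ℝ := fun i => y i / a i with hxdef
  have hy : ∀ i, y i = x i * a i := fun i =>
    (div_mul_cancel₀ (y i) (ha i).ne').symm
  set b : Fin n → Fin n → ℝ := fun i j => a i * M i j * a j with hbdef
  have hbsymm : ∀ i j, b i j = b j i := fun i j => by
    simp only [hbdef]; rw [hMsym i j]; ring
  have hbnn : ∀ i j, i ≠ j → 0 ≤ b i j := fun i j hij => by
    simp only [hbdef]
    exact mul_nonneg (mul_nonneg (ha i).le (hoff i j hij)) (ha j).le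
  have hrow : ∀ i, (∑ j, b i j) = a i * M.mulVec a i := fun i => by
    simp only [hbdef, mulVec, dotProduct, Finset.mul_sum]
    exact Finset.sum_congr rfl fun j _ => by ring
  have hQ : y ⬝ᵥ M.mulVec y = ∑ i, ∑ j, b i j * x i * x j := by
    simp only [dotProduct, mulVec, Finset.mul_sum]
    refine Finset.sum_congr rfl fun i _ => Finset.sum_congr rfl fun j _ => ?_
    rw [hy i, hy j]
    simp only [hbdef]
    ring
  rw [hQ, sum_sq_identity b hbsymm x]
  -- T1 : sum of nonpositive terms
  have hT1 : ∀ i, (∑ j, b i j) * x i ^ 2 ≤ 0 := fun i => by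
    rw [hrow i]
    exact mul_nonpos_of_nonpos_of_nonneg
      (mul_nonpos_of_nonneg_of_nonpos (ha i).le (hMa i)) (sq_nonneg _)
  have hT2 : ∀ i j, 0 ≤ b i j * (x i - x j) ^ 2 := fun i j => by
    by_cases hij : i = j
    · subst hij; simp
    · exact mul_nonneg (hbnn i j hij) (sq_nonneg _)
  have hT2nn : (0:ℝ) ≤ ∑ i, ∑ j, b i j * (x i - x j) ^ 2 :=
    Finset.sum_nonneg fun i _ => Finset.sum_nonneg fun j _ => hT2 i j
  by_cases hx0 : x i₀ = 0
  · -- y ≠ 0 gives some k with x k ≠ 0, hence an edge with differing x values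
    obtain ⟨k, hk⟩ := Function.ne_iff.mp hy0
    have hxk : x k ≠ 0 := fun h => hk (by rw [hy k, h, zero_mul]; rfl)
    have hne : x i₀ ≠ x k := by rw [hx0]; exact fun h => hxk h.symm
    obtain ⟨w⟩ := hconn i₀ k
    obtain ⟨i, j, hadj, hij⟩ := walk_edge_ne w hne
    rw [SimpleGraph.fromRel_adj] at hadj
    obtain ⟨hne', hM⟩ := hadj
    have hMij : 0 < M i j := by
      rcases hM with h | h
      · exact h
      · rw [← hMsym i j]; exact h
    have hbij : 0 < b i j * (x i - x j) ^ 2 := by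
      apply mul_pos
      · exact mul_pos (mul_pos (ha i) hMij) (ha j)
      · have hsub : x i - x j ≠ 0 := sub_ne_zero.mpr hij
        positivity
    have hT2pos : 0 < ∑ i, ∑ j, b i j * (x i - x j) ^ 2 := by
      have h1 : 0 < ∑ j', b i j' * (x i - x j') ^ 2 := by
        have := Finset.sum_lt_sum (f := fun _ => (0:ℝ))
          (g := fun j' => b i j' * (x i - x j') ^ 2)
          (fun j' _ => hT2 i j') ⟨j, Finset.mem_univ j, hbij⟩
        simpa using this
      have := Finset.sum_lt_sum (f := fun _ => (0:ℝ))
        (g := fun i' => ∑ j', b i' j' * (x i' - x j') ^ 2)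
        (fun i' _ => Finset.sum_nonneg fun j' _ => hT2 i' j')
        ⟨i, Finset.mem_univ i, h1⟩
      simpa using this
    have h1 : ∑ i, (∑ j, b i j) * x i ^ 2 ≤ 0 :=
      Finset.sum_nonpos fun i _ => hT1 i
    nlinarith
  · -- the i₀ term of T1 is strictly negative
    have hneg : (∑ j, b i₀ j) * x i₀ ^ 2 < 0 := by
      rw [hrow i₀]
      have hx2 : 0 < x i₀ ^ 2 := by positivity
      exact mul_neg_of_neg_of_pos (mul_neg_of_pos_of_neg (ha i₀) hMa0) hx2
    have h1 : ∑ i, (∑ j, b i j) * x i ^ 2 < 0 := by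
      have := Finset.sum_lt_sum (f := fun i => (∑ j, b i j) * x i ^ 2)
        (g := fun _ => (0:ℝ)) (fun i _ => hT1 i) ⟨i₀, Finset.mem_univ i₀, hneg⟩
      simpa using this
    nlinarith
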